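/- For r,s ≥ 3 both odd, any full row {u_i} × V(C_s) and any full column V(C_r) × {v_j} of the torus C_r □ C_s is a 2-antiresolving set; consequently adim_2(C_r □ C_s) ≤ min{r,s}. -/

import Mathlib

open SimpleGraph

/-- Two vertices have the same distances to every vertex of `S`. -/
def sameDists {V : Type*} (G : SimpleGraph V) (S : Set V) (x y : V) : Prop :=
  ∀ z ∈ S, G.dist x z = G.dist y z

/-- The equivalence class (outside `S`) of `x` under the equal-distance relation `R_S`. -/
def cls {V : Type*} (G : SimpleGraph V) (S : Set V) (x : V) : Set V :=
  {y | y ∉ S ∧ sameDists G S x y}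

/-- `S` is a `k`-antiresolving set: `S` is nonempty, does not cover `V`, and the minimum
size of an equivalence class of `R_S` on `V ∖ S` equals `k`. -/
def IsKARS {V : Type*} (G : SimpleGraph V) (k : ℕ) (S : Set V) : Prop :=
  S.Nonempty ∧ Sᶜ.Nonempty ∧
    (∀ x ∉ S, k ≤ (cls G S x).ncard) ∧ ∃ x ∉ S, (cls G S x).ncard = k

/-- The `k`-metric antidimension: the smallest cardinality of a `k`-antiresolving set,
`⊤` (i.e. `+∞`) if none exists. -/
noncomputable def adim {V : Type*} (G : SimpleGraph V) (k : ℕ) : ℕ∞ :=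
  sInf ((fun S => (S.ncard : ℕ∞)) '' {S : Set V | IsKARS G k S})



/-- val of difference, expressed without mod. -/
def dval {n : ℕ} (u v : Fin n) : ℕ :=
  if u.val ≤ v.val then v.val - u.val else v.val + n - u.val

lemma sub_val {n : ℕ} (u v : Fin n) : (v - u).val = dval u v := by
  rcases Nat.eq_zero_or_pos n with h | h
  · exact absurd u.isLt (by omega)
  rw [Fin.sub_def, dval]
  have hu := u.isLt; have hv := v.isLt
  simp only [Fin.val_mk]
  split_ifs with hle
  · have h2 : n - u.val + v.val = n + (v.val - u.val) := by omega
    rw [h2, Nat.add_mod_left, Nat.mod_eq_of_lt (by omega)]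
  · rw [Nat.mod_eq_of_lt (by omega)]; omega

/-- circular distance. -/
def cdist {n : ℕ} (u v : Fin n) : ℕ := min (dval u v) (dval v u)

lemma cdist_comm {n : ℕ} (u v : Fin n) : cdist u v = cdist v u := min_comm _ _

lemma cdist_eq_zero {n : ℕ} {u v : Fin n} (h : cdist u v = 0) : u = v := by
  have hu := u.isLt; have hv := v.isLt
  apply Fin.ext
  simp only [cdist, dval] at h
  split_ifs at h <;> omega

lemma cdist_self {n : ℕ} (u : Fin n) : cdist u u = 0 := by
  simp [cdist, dval]

lemma cdist_step {n : ℕ} {u w : Fin n} (t : Fin n)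
    (h : dval w u = 1 ∨ dval u w = 1) : cdist u t ≤ cdist w t + 1 := by
  have hu := u.isLt; have hv := w.isLt; have ht := t.isLt
  simp only [cdist, dval] at *
  split_ifs at * <;> omega

open Fin.NatCast in
lemma cycle_walk_add {n : ℕ} [NeZero n] (hn : 2 ≤ n) (u : Fin n) :
    ∀ k : ℕ, ∃ p : (cycleGraph n).Walk u (u + (k : Fin n)), p.length = k := by
  intro k
  induction k with
  | zero => exact ⟨(Walk.nil).copy rfl (by simp), by simp⟩
  | succ k ih =>
    obtain ⟨p, hp⟩ := ih
    have hadj : (cycleGraph n).Adj (u + (k : Fin n)) (u + ((k : ℕ) + 1 : ℕ)) := by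
      rw [cycleGraph_adj']
      right
      have : (u + ((k : ℕ) + 1 : ℕ) : Fin n) - (u + (k : Fin n)) = 1 := by
        push_cast; abel
      rw [this]
      have : (1 : Fin n).val = 1 := by
        rcases n with _ | _ | n
        · omega
        · omega
        · rfl
      exact this
    exact ⟨p.concat hadj, by simp [hp]⟩

open Fin.NatCast in
lemma cycle_dist {n : ℕ} (hn : 3 ≤ n) (u v : Fin n) :
    (cycleGraph n).dist u v = cdist u v := by
  haveI : NeZero n := ⟨by omega⟩
  have hconn : (cycleGraph n).Connected := by
    obtain ⟨m, rfl⟩ : ∃ m, n = m + 1 := ⟨n - 1, by omega⟩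
    exact cycleGraph_connected
  apply le_antisymm
  · -- upper bound
    have key : ∀ a b : Fin n, (cycleGraph n).dist a b ≤ dval a b := by
      intro a b
      obtain ⟨p, hp⟩ := cycle_walk_add (by omega) a (dval a b)
      have hb : a + ((dval a b : ℕ) : Fin n) = b := by
        rw [← sub_val, Fin.cast_val_eq_self, add_sub_cancel]
      have := dist_le (p.copy rfl hb)
      rwa [Walk.length_copy, hp] at this
    have h1 := key u v
    have h2 := key v u
    rw [cdist]
    rcases min_cases (dval u v) (dval v u) with ⟨h, _⟩ | ⟨h, _⟩ <;>
      rw [h]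
    · exact h1
    · exact dist_comm (G := cycleGraph n) ▸ h2
  · -- lower bound
    obtain ⟨p, hp⟩ := hconn.exists_walk_length_eq_dist u v
    rw [← hp]
    clear hp
    induction p with
    | nil => simp [cdist_self]
    | @cons a b c hadj q ih =>
      rw [cycleGraph_adj'] at hadj
      rw [sub_val, sub_val] at hadj
      calc cdist a c ≤ cdist b c + 1 := cdist_step c hadj
        _ ≤ q.length + 1 := by omega
        _ = (Walk.cons _ q).length := by simp [Walk.length_cons]

lemma boxProd_dist {α β : Type*} {G : SimpleGraph α} {H : SimpleGraph β}
    (hG : G.Connected) (hH : H.Connected) (x y : α × β) :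
    (G □ H).dist x y = G.dist x.1 y.1 + H.dist x.2 y.2 := by
  obtain ⟨x1, x2⟩ := x
  obtain ⟨y1, y2⟩ := y
  apply le_antisymm
  · obtain ⟨p, hp⟩ := hG.exists_walk_length_eq_dist x1 y1
    obtain ⟨q, hq⟩ := hH.exists_walk_length_eq_dist x2 y2
    calc (G □ H).dist (x1, x2) (y1, y2)
        ≤ ((p.boxProdLeft H x2).append (q.boxProdRight G y1)).length := dist_le _
      _ = p.length + q.length := by
          rw [Walk.length_append]
          exact congrArg₂ (· + ·) (Walk.length_map _ _) (Walk.length_map _ _)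
      _ = G.dist x1 y1 + H.dist x2 y2 := by rw [hp, hq]
  · obtain ⟨p, hp⟩ := (hG.boxProd hH).exists_walk_length_eq_dist (x1, x2) (y1, y2)
    rw [← hp]; clear hp
    have key : ∀ (a b : α × β) (p : (G □ H).Walk a b),
        G.dist a.1 b.1 + H.dist a.2 b.2 ≤ p.length := ?_
    · exact key _ _ p
    intro a b p
    induction p with
    | nil => simp
    | @cons a b c hadj q ih =>
      rw [boxProd_adj] at hadj
      rw [Walk.length_cons]
      rcases hadj with ⟨h1, h2⟩ | ⟨h1, h2⟩
      · calc G.dist a.1 c.1 + H.dist a.2 c.2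
            ≤ (G.dist a.1 b.1 + G.dist b.1 c.1) + H.dist b.2 c.2 := by
              rw [← h2]; exact add_le_add_left (hG.dist_triangle) _
          _ ≤ 1 + (G.dist b.1 c.1 + H.dist b.2 c.2) := by
              have := dist_le h1.toWalk
              simp only [Walk.length_cons, Walk.length_nil] at this
              omega
          _ ≤ q.length + 1 := by omega
      · calc G.dist a.1 c.1 + H.dist a.2 c.2
            ≤ G.dist b.1 c.1 + (H.dist a.2 b.2 + H.dist b.2 c.2) := by
              rw [← h2]; exact add_le_add_right (hH.dist_triangle) _
          _ ≤ 1 + (G.dist b.1 c.1 + H.dist b.2 c.2) := by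
              have := dist_le h1.toWalk
              simp only [Walk.length_cons, Walk.length_nil] at this
              omega
          _ ≤ q.length + 1 := by omega

lemma odd_key {n : ℕ} (hodd : Odd n) {i a c : Fin n}
    (h : cdist i a = cdist i c) : dval i a = dval i c ∨ dval i a = dval c i := by
  obtain ⟨m, hm⟩ := hodd
  have hi := i.isLt; have ha := a.isLt; have hc := c.isLt
  simp only [cdist, dval] at *
  split_ifs at * <;> omega

lemma two_eq_zero {n : ℕ} [NeZero n] (hodd : Odd n) {x : Fin n} (h : x + x = 0) : x = 0 := by
  obtain ⟨m, hm⟩ := hodd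
  have hx := x.isLt
  have := congrArg Fin.val h
  rw [Fin.add_def] at this
  simp only [Fin.val_zero] at this
  apply Fin.ext
  simp only [Fin.val_zero]
  rcases Nat.lt_or_ge (x.val + x.val) n with h2 | h2
  · rw [Nat.mod_eq_of_lt h2] at this; omega
  · rw [Nat.mod_eq_sub_mod h2, Nat.mod_eq_of_lt (by omega)] at this
    omega

section torus
variable {r s : ℕ}

lemma torus_dist (hr : 3 ≤ r) (hs : 3 ≤ s) (p q : Fin r × Fin s) :
    ((cycleGraph r).boxProd (cycleGraph s)).dist p q = cdist p.1 q.1 + cdist p.2 q.2 := by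
  have hcr : (cycleGraph r).Connected := by
    obtain ⟨m, rfl⟩ : ∃ m, r = m + 1 := ⟨r - 1, by omega⟩
    exact cycleGraph_connected
  have hcs : (cycleGraph s).Connected := by
    obtain ⟨m, rfl⟩ : ∃ m, s = m + 1 := ⟨s - 1, by omega⟩
    exact cycleGraph_connected
  rw [boxProd_dist hcr hcs, cycle_dist hr, cycle_dist hs]

lemma row_cls (hr : 3 ≤ r) (hs : 3 ≤ s) (hro : Odd r) (i : Fin r)
    {x : Fin r × Fin s} (hx : x.1 ≠ i) :
    cls ((cycleGraph r).boxProd (cycleGraph s)) {p | p.1 = i} x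
      = {x, (i - (x.1 - i), x.2)} := by
  haveI : NeZero r := ⟨by omega⟩
  obtain ⟨a, b⟩ := x
  simp only [ne_eq] at hx
  have hdist := torus_dist hr hs
  have hmir : ∀ t : Fin r, cdist (i - (t - i)) i = cdist t i := by
    intro t
    have h1 : i - (i - (t - i)) = t - i := sub_sub_cancel _ _
    have h2 : (i - (t - i)) - i = i - t := by
      rw [sub_sub_cancel_left, neg_sub]
    unfold cdist
    rw [← sub_val, ← sub_val, ← sub_val, ← sub_val, h1, h2, min_comm]
  ext ⟨c, d⟩
  constructor
  · rintro ⟨hyS, hsd⟩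
    simp only [Set.mem_setOf_eq] at hyS
    have e1 := hsd (i, d) rfl
    have e2 := hsd (i, b) rfl
    rw [hdist, hdist] at e1
    rw [hdist, hdist] at e2
    simp only [cdist_self] at e1 e2
    have hbd : cdist b d = 0 := by
      have := cdist_comm d b
      omega
    have hbd' : b = d := cdist_eq_zero hbd
    have hac : cdist i a = cdist i c := by
      rw [cdist_comm i a, cdist_comm i c]; omega
    rcases odd_key hro hac with h | h
    · rw [← sub_val, ← sub_val] at h
      have : a - i = c - i := Fin.val_injective h
      have : a = c := by
        have := congrArg (· + i) this
        simpa [sub_add_cancel] using this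
      left; simp [this, hbd']
    · rw [← sub_val, ← sub_val] at h
      have h2 : a - i = i - c := Fin.val_injective h
      have : c = i - (a - i) := by
        rw [h2, sub_sub_cancel]
      right; simp [this, hbd']
  · intro hmem
    rcases hmem with h | h
    · rw [h]
      refine ⟨by simpa using hx, fun z hz => rfl⟩
    · rw [h]
      constructor
      · simp only [Set.mem_setOf_eq]
        intro hcon
        apply hx
        have : a - i = 0 := by
          have := congrArg (i - ·) hcon
          simpa [sub_sub_cancel] using this
        have := congrArg (· + i) this
        simpa [sub_add_cancel] using this
      · rintro ⟨z1, z2⟩ hz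
        simp only [Set.mem_setOf_eq] at hz
        subst hz
        rw [hdist, hdist]
        simp only
        rw [hmir a]

lemma row_ne (hr : 3 ≤ r) (hro : Odd r) {a i : Fin r} (hx : a ≠ i) :
    a ≠ i - (a - i) := by
  haveI : NeZero r := ⟨by omega⟩
  intro hcon
  apply hx
  have h1 : (a - i) + (a - i) = 0 := by
    have h0 : a - i = -(a - i) := by
      conv_lhs => rw [hcon]
      rw [sub_sub_cancel_left]
    exact eq_neg_iff_add_eq_zero.mp h0
  exact sub_eq_zero.mp (two_eq_zero hro h1)

end torus

section torus2
variable {r s : ℕ}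

lemma col_cls (hr : 3 ≤ r) (hs : 3 ≤ s) (hso : Odd s) (j : Fin s)
    {x : Fin r × Fin s} (hx : x.2 ≠ j) :
    cls ((cycleGraph r).boxProd (cycleGraph s)) {p | p.2 = j} x
      = {x, (x.1, j - (x.2 - j))} := by
  haveI : NeZero s := ⟨by omega⟩
  obtain ⟨a, b⟩ := x
  simp only [ne_eq] at hx
  have hdist := torus_dist hr hs
  have hmir : ∀ t : Fin s, cdist (j - (t - j)) j = cdist t j := by
    intro t
    have h1 : j - (j - (t - j)) = t - j := sub_sub_cancel _ _
    have h2 : (j - (t - j)) - j = j - t := by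
      rw [sub_sub_cancel_left, neg_sub]
    unfold cdist
    rw [← sub_val, ← sub_val, ← sub_val, ← sub_val, h1, h2, min_comm]
  ext ⟨c, d⟩
  constructor
  · rintro ⟨hyS, hsd⟩
    simp only [Set.mem_setOf_eq] at hyS
    have e1 := hsd (c, j) rfl
    have e2 := hsd (a, j) rfl
    rw [hdist, hdist] at e1
    rw [hdist, hdist] at e2
    simp only [cdist_self] at e1 e2
    have hbd : cdist a c = 0 := by
      have := cdist_comm c a
      omega
    have hbd' : a = c := cdist_eq_zero hbd
    have hac : cdist j b = cdist j d := by
      rw [cdist_comm j b, cdist_comm j d]; omega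
    rcases odd_key hso hac with h | h
    · rw [← sub_val, ← sub_val] at h
      have : b - j = d - j := Fin.val_injective h
      have : b = d := by
        have := congrArg (· + j) this
        simpa [sub_add_cancel] using this
      left; simp [this, hbd']
    · rw [← sub_val, ← sub_val] at h
      have h2 : b - j = j - d := Fin.val_injective h
      have : d = j - (b - j) := by
        rw [h2, sub_sub_cancel]
      right; simp [this, hbd']
  · intro hmem
    rcases hmem with h | h
    · rw [h]
      refine ⟨by simpa using hx, fun z hz => rfl⟩
    · rw [h]
      constructor
      · simp only [Set.mem_setOf_eq]
        intro hcon
        apply hx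
        have : b - j = 0 := by
          have := congrArg (j - ·) hcon
          simpa [sub_sub_cancel] using this
        exact sub_eq_zero.mp this
      · rintro ⟨z1, z2⟩ hz
        simp only [Set.mem_setOf_eq] at hz
        subst hz
        rw [hdist, hdist]
        simp only
        rw [hmir b]

lemma row_isKARS (hr : 3 ≤ r) (hs : 3 ≤ s) (hro : Odd r) (i : Fin r) :
    IsKARS ((cycleGraph r).boxProd (cycleGraph s)) 2 {p : Fin r × Fin s | p.1 = i} := by
  haveI : NeZero r := ⟨by omega⟩
  haveI : NeZero s := ⟨by omega⟩
  have hone : (1 : Fin r) ≠ 0 := by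
    intro h
    have := congrArg Fin.val h
    rw [Fin.val_one', Nat.mod_eq_of_lt (by omega)] at this
    simp at this
  have hne : ∀ t : Fin r, t + 1 ≠ t := by
    intro t h
    apply hone
    have : t + 1 = t + 0 := by rw [h, add_zero]
    exact add_left_cancel this
  have hcard : ∀ x : Fin r × Fin s, x.1 ≠ i →
      (cls ((cycleGraph r).boxProd (cycleGraph s)) {p : Fin r × Fin s | p.1 = i} x).ncard = 2 := by
    intro x hx
    rw [row_cls hr hs hro i hx]
    apply Set.ncard_pair
    intro h
    exact row_ne hr hro hx (congrArg Prod.fst h)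
  refine ⟨⟨(i, 0), rfl⟩, ⟨(i + 1, 0), hne i⟩, ?_, ⟨(i + 1, 0), hne i, hcard _ (hne i)⟩⟩
  intro x hx
  rw [hcard x hx]

lemma col_isKARS (hr : 3 ≤ r) (hs : 3 ≤ s) (hso : Odd s) (j : Fin s) :
    IsKARS ((cycleGraph r).boxProd (cycleGraph s)) 2 {p : Fin r × Fin s | p.2 = j} := by
  haveI : NeZero r := ⟨by omega⟩
  haveI : NeZero s := ⟨by omega⟩
  have hone : (1 : Fin s) ≠ 0 := by
    intro h
    have := congrArg Fin.val h
    rw [Fin.val_one', Nat.mod_eq_of_lt (by omega)] at this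
    simp at this
  have hne : ∀ t : Fin s, t + 1 ≠ t := by
    intro t h
    apply hone
    have : t + 1 = t + 0 := by rw [h, add_zero]
    exact add_left_cancel this
  have hcard : ∀ x : Fin r × Fin s, x.2 ≠ j →
      (cls ((cycleGraph r).boxProd (cycleGraph s)) {p : Fin r × Fin s | p.2 = j} x).ncard = 2 := by
    intro x hx
    rw [col_cls hr hs hso j hx]
    apply Set.ncard_pair
    intro h
    exact row_ne hs hso hx (congrArg Prod.snd h)
  refine ⟨⟨(0, j), rfl⟩, ⟨(0, j + 1), hne j⟩, ?_, ⟨(0, j + 1), hne j, hcard _ (hne j)⟩⟩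
  intro x hx
  rw [hcard x hx]

end torus2


lemma row_ncard {r s : ℕ} (i : Fin r) : ({p : Fin r × Fin s | p.1 = i}).ncard = s := by
  have h : {p : Fin r × Fin s | p.1 = i} = (fun b : Fin s => (i, b)) '' Set.univ := by
    ext ⟨a, b⟩
    simp [Prod.ext_iff, eq_comm]
  rw [h, Set.ncard_image_of_injective _ (fun x y hxy => (Prod.ext_iff.mp hxy).2),
    Set.ncard_univ, Nat.card_eq_fintype_card, Fintype.card_fin]

lemma col_ncard {r s : ℕ} (j : Fin s) : ({p : Fin r × Fin s | p.2 = j}).ncard = r := by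
  have h : {p : Fin r × Fin s | p.2 = j} = (fun a : Fin r => (a, j)) '' Set.univ := by
    ext ⟨a, b⟩
    simp [Prod.ext_iff, eq_comm]
  rw [h, Set.ncard_image_of_injective _ (fun x y hxy => (Prod.ext_iff.mp hxy).1),
    Set.ncard_univ, Nat.card_eq_fintype_card, Fintype.card_fin]


/-- For odd `r, s ≥ 3`, every full row and every full column of the torus `C_r □ C_s`
is a 2-ARS; consequently `adim_2(C_r □ C_s) ≤ min r s`. -/
theorem stmt5 (r s : ℕ) (hr : 3 ≤ r) (hs : 3 ≤ s) (hro : Odd r) (hso : Odd s) :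
    (∀ i : Fin r,
      IsKARS ((cycleGraph r).boxProd (cycleGraph s)) 2 {p : Fin r × Fin s | p.1 = i}) ∧
    (∀ j : Fin s,
      IsKARS ((cycleGraph r).boxProd (cycleGraph s)) 2 {p : Fin r × Fin s | p.2 = j}) ∧
    adim ((cycleGraph r).boxProd (cycleGraph s)) 2 ≤ ((min r s : ℕ) : ℕ∞) := by


  refine ⟨fun i => row_isKARS hr hs hro i, fun j => col_isKARS hr hs hso j, ?_⟩
  have i0 : Fin r := ⟨0, by omega⟩
  have j0 : Fin s := ⟨0, by omega⟩
  have h1 : adim ((cycleGraph r).boxProd (cycleGraph s)) 2 ≤ (s : ℕ∞) := by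
    have : ((s : ℕ) : ℕ∞) = (fun S : Set (Fin r × Fin s) => (S.ncard : ℕ∞))
        {p : Fin r × Fin s | p.1 = i0} := by simp only; rw [row_ncard]
    rw [this]
    exact sInf_le ⟨_, row_isKARS hr hs hro i0, rfl⟩
  have h2 : adim ((cycleGraph r).boxProd (cycleGraph s)) 2 ≤ (r : ℕ∞) := by
    have : ((r : ℕ) : ℕ∞) = (fun S : Set (Fin r × Fin s) => (S.ncard : ℕ∞))
        {p : Fin r × Fin s | p.2 = j0} := by simp only; rw [col_ncard]
    rw [this]
    exact sInf_le ⟨_, col_isKARS hr hs hso j0, rfl⟩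
  have hmin : ((min r s : ℕ) : ℕ∞) = min ((r : ℕ) : ℕ∞) ((s : ℕ) : ℕ∞) := by
    rcases le_total r s with h | h
    · rw [min_eq_left h, min_eq_left (by exact_mod_cast h)]
    · rw [min_eq_right h, min_eq_right (by exact_mod_cast h)]
  rw [hmin]
  exact le_min h2 h1
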